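/- arXiv:0906.2696 — 2 statements merged into one kernel-verified Lean document; each statement's English description precedes it below -/
import Mathlib

section
/- The 63 projective lines of the E7 root system can be partitioned into nine mutually disjoint sets of seven mutually orthogonal lines, namely the sets Q_0,…,Q_6, Q_+, Q_− described in terms of coordinates indexed by F_7 ∪ {∞}. -/
set_option maxRecDepth 40000

/-- The index set `F₇ ∪ {∞}`; `none` plays the role of `∞`. -/
abbrev Idx : Type := Option (ZMod 7)

/-- The projective line (ray) spanned by a vector. -/
def rayI (v : Idx → ℝ) : Submodule ℝ (Idx → ℝ) := Submodule.span ℝ {v}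

/-- Orthogonality of subspaces with respect to the standard inner product. -/
def PerpI (L M : Submodule ℝ (Idx → ℝ)) : Prop :=
  ∀ x ∈ L, ∀ y ∈ M, ∑ i, x i * y i = 0

/-- `λ^(k)`: 1 at `∞`, `−1` at `k`, 0 elsewhere. -/
def lamV (k : ZMod 7) : Idx → ℝ := fun j =>
  if j = none then 1 else if j = some k then -1 else 0

/-- `μ^(k)`: 1 at positions `∞, k, k+1, k+3` and `−1` at the other four positions. -/
def muV (k : ZMod 7) : Idx → ℝ := fun j =>
  if j = none ∨ j = some k ∨ j = some (k + 1) ∨ j = some (k + 3) then 1 else -1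

/-- `ν^(k)`: 1 at positions `∞, k, k−1, k−3` and `−1` at the other four positions. -/
def nuV (k : ZMod 7) : Idx → ℝ := fun j =>
  if j = none ∨ j = some k ∨ j = some (k - 1) ∨ j = some (k - 3) then 1 else -1

/-- `ξ^(k,i)`: 1 at `k+i`, `−1` at `k−i`, 0 elsewhere. -/
def xiV (k i : ZMod 7) : Idx → ℝ := fun j =>
  if j = some (k + i) then 1 else if j = some (k - i) then -1 else 0

/-- `η^(k,i)`: 1 at positions `∞, k, k+i, k−i` and `−1` at the other four positions. -/
def etaV (k i : ZMod 7) : Idx → ℝ := fun j =>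
  if j = none ∨ j = some k ∨ j = some (k + i) ∨ j = some (k - i) then 1 else -1

/-- The `E7` root system modeled on coordinates indexed by `F₇ ∪ {∞}`: the union of
the orbits (under permutations of the coordinates) of a vector with one entry `1`,
one entry `−1` and six zeros, and of a vector with four entries `1/2` and four
entries `−1/2`. -/
def E7rootsI : Set (Idx → ℝ) :=
  {v | ∃ σ : Equiv.Perm Idx,
    v = lamV 0 ∘ σ ∨ v = ((1 : ℝ) / 2) • (muV 0 ∘ σ)}

/-- The 63 projective lines of the `E7` configuration. -/
def E7linesI : Set (Submodule ℝ (Idx → ℝ)) := rayI '' E7rootsI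

/-- `Q_k = {λ^(k), ξ^(k,1), ξ^(k,2), ξ^(k,3), η^(k,1), η^(k,2), η^(k,3)}`. -/
def Q (k : ZMod 7) : Set (Submodule ℝ (Idx → ℝ)) :=
  {rayI (lamV k), rayI (xiV k 1), rayI (xiV k 2), rayI (xiV k 3),
   rayI (etaV k 1), rayI (etaV k 2), rayI (etaV k 3)}

/-- `Q₊ = {μ^(0), …, μ^(6)}`. -/
def Qp : Set (Submodule ℝ (Idx → ℝ)) := rayI '' Set.range muV

/-- `Q₋ = {ν^(0), …, ν^(6)}`. -/
def Qm : Set (Submodule ℝ (Idx → ℝ)) := rayI '' Set.range nuV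

/-- The nine sets `Q₀, …, Q₆, Q₊, Q₋`. -/
def Qfam : Fin 9 → Set (Submodule ℝ (Idx → ℝ)) :=
  ![Q 0, Q 1, Q 2, Q 3, Q 4, Q 5, Q 6, Qp, Qm]

/-! ### Auxiliary integer-vector versions -/

def lamZ (k : ZMod 7) : Idx → ℤ := fun j =>
  if j = none then 1 else if j = some k then -1 else 0
def muZ (k : ZMod 7) : Idx → ℤ := fun j =>
  if j = none ∨ j = some k ∨ j = some (k + 1) ∨ j = some (k + 3) then 1 else -1
def nuZ (k : ZMod 7) : Idx → ℤ := fun j =>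
  if j = none ∨ j = some k ∨ j = some (k - 1) ∨ j = some (k - 3) then 1 else -1
def xiZ (k i : ZMod 7) : Idx → ℤ := fun j =>
  if j = some (k + i) then 1 else if j = some (k - i) then -1 else 0
def etaZ (k i : ZMod 7) : Idx → ℤ := fun j =>
  if j = none ∨ j = some k ∨ j = some (k + i) ∨ j = some (k - i) then 1 else -1
def eZ (a b : Idx) : Idx → ℤ := fun j => if j = a then 1 else if j = b then -1 else 0
def chiZ (S : Finset Idx) : Idx → ℤ := fun j => if j ∈ S then 1 else -1

def toR (z : Idx → ℤ) : Idx → ℝ := fun i => (z i : ℝ)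

def rz (z : Idx → ℤ) : Submodule ℝ (Idx → ℝ) := rayI (toR z)

def QL (k : ZMod 7) : List (Idx → ℤ) :=
  [lamZ k, xiZ k 1, xiZ k 2, xiZ k 3, etaZ k 1, etaZ k 2, etaZ k 3]
def muL : List (Idx → ℤ) := [muZ 0, muZ 1, muZ 2, muZ 3, muZ 4, muZ 5, muZ 6]
def nuL : List (Idx → ℤ) := [nuZ 0, nuZ 1, nuZ 2, nuZ 3, nuZ 4, nuZ 5, nuZ 6]
def famL : Fin 9 → List (Idx → ℤ) :=
  ![QL 0, QL 1, QL 2, QL 3, QL 4, QL 5, QL 6, muL, nuL]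
def allL : List (Idx → ℤ) :=
  QL 0 ++ QL 1 ++ QL 2 ++ QL 3 ++ QL 4 ++ QL 5 ++ QL 6 ++ muL ++ nuL

/-! ### Bridges between the real and integer vectors -/

theorem toR_inj {z z' : Idx → ℤ} (h : toR z = toR z') : z = z' := by
  funext i
  have := congrFun h i
  simp only [toR] at this
  exact_mod_cast this

theorem toR_neg (z : Idx → ℤ) : toR (-z) = -toR z := by
  funext i; simp [toR]

theorem lam_eq (k : ZMod 7) : lamV k = toR (lamZ k) := by
  funext j; simp only [lamV, lamZ, toR]; split_ifs <;> norm_num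

theorem mu_eq (k : ZMod 7) : muV k = toR (muZ k) := by
  funext j; simp only [muV, muZ, toR]; split_ifs <;> norm_num

theorem nu_eq (k : ZMod 7) : nuV k = toR (nuZ k) := by
  funext j; simp only [nuV, nuZ, toR]; split_ifs <;> norm_num

theorem xi_eq (k i : ZMod 7) : xiV k i = toR (xiZ k i) := by
  funext j; simp only [xiV, xiZ, toR]; split_ifs <;> norm_num

theorem eta_eq (k i : ZMod 7) : etaV k i = toR (etaZ k i) := by
  funext j; simp only [etaV, etaZ, toR]; split_ifs <;> norm_num

/-! ### Generalities about rays -/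

theorem rayI_smul (c : ℝ) (hc : c ≠ 0) (v : Idx → ℝ) : rayI (c • v) = rayI v := by
  unfold rayI
  rw [Submodule.span_singleton_smul_eq (IsUnit.mk0 c hc) v]

theorem rayI_neg (v : Idx → ℝ) : rayI (-v) = rayI v := by
  have := rayI_smul (-1) (by norm_num) v
  simpa using this

theorem ray_pm {z z' : Idx → ℤ} (h : z' = z ∨ z' = -z) : rz z' = rz z := by
  rcases h with rfl | rfl
  · rfl
  · unfold rz; rw [toR_neg, rayI_neg]

theorem dot_cast (z z' : Idx → ℤ) : ∑ i, toR z i * toR z' i = ((∑ i, z i * z' i : ℤ) : ℝ) := by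
  push_cast [toR]
  rfl

theorem perp_of_dot {z z' : Idx → ℤ} (h : ∑ i, z i * z' i = 0) :
    PerpI (rz z) (rz z') := by
  intro x hx y hy
  rw [rz, rayI, Submodule.mem_span_singleton] at hx hy
  obtain ⟨a, rfl⟩ := hx
  obtain ⟨b, rfl⟩ := hy
  have : ∑ i, (a • toR z) i * (b • toR z') i = (a * b) * ∑ i, toR z i * toR z' i := by
    rw [Finset.mul_sum]
    congr 1; funext i
    simp [Pi.smul_apply]; ring
  rw [this, dot_cast, h]; simp

def ZSmall (z : Idx → ℤ) : Prop := z ≠ 0 ∧ ∀ i, z i = -1 ∨ z i = 0 ∨ z i = 1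

theorem ray_ne {z z' : Idx → ℤ} (hz : ZSmall z) (hz' : ZSmall z')
    (h : ¬(z' = z ∨ z' = -z)) : rz z ≠ rz z' := by
  intro he
  apply h
  have hmem : toR z' ∈ rayI (toR z) := by
    rw [show rayI (toR z) = rz z' from he, rz, rayI]
    exact Submodule.mem_span_singleton_self _
  rw [rayI, Submodule.mem_span_singleton] at hmem
  obtain ⟨c, hc⟩ := hmem
  obtain ⟨j, hj⟩ : ∃ j, z' j ≠ 0 := by
    by_contra hcon
    push_neg at hcon
    exact hz'.1 (funext hcon)
  have hcj : (z' j : ℝ) = c * (z j : ℝ) := by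
    have := congrFun hc j
    simpa [toR, Pi.smul_apply, mul_comm] using this.symm
  have hzj : z j ≠ 0 := by
    intro h0
    rw [h0] at hcj
    simp at hcj
    exact hj (by exact_mod_cast hcj)
  have hc1 : c = 1 ∨ c = -1 := by
    rcases hz.2 j with h1 | h1 | h1 <;> rcases hz'.2 j with h2 | h2 | h2 <;>
      rw [h1, h2] at hcj <;> push_cast at hcj <;>
      first
        | (exact absurd h1 hzj)
        | (exact absurd h2 hj)
        | (left; linarith)
        | (right; linarith)
  rcases hc1 with rfl | rfl
  · left; apply toR_inj; rw [← hc]; funext i; simp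
  · right; apply toR_inj; rw [toR_neg, ← hc]; funext i; simp

/-! ### Classification of the roots -/

def Tset : Finset Idx := {none, some 0, some 1, some 3}

theorem lam_comp (σ : Equiv.Perm Idx) :
    lamV 0 ∘ σ = toR (eZ (σ.symm none) (σ.symm (some 0))) := by
  funext j
  simp only [Function.comp_apply, lamV, toR, eZ, ← Equiv.eq_symm_apply]
  split_ifs <;> norm_num

theorem mu_comp (σ : Equiv.Perm Idx) :
    muV 0 ∘ σ = toR (chiZ (Tset.image σ.symm)) := by
  have h1 : (0 : ZMod 7) + 1 = 1 := by decide
  have h3 : (0 : ZMod 7) + 3 = 3 := by decide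
  funext j
  simp only [Function.comp_apply, muV, toR, chiZ, Finset.mem_image, h1, h3]
  have : (σ j = none ∨ σ j = some 0 ∨ σ j = some 1 ∨ σ j = some 3) ↔
      (∃ a ∈ Tset, σ.symm a = j) := by
    constructor
    · rintro (h | h | h | h) <;>
        exact ⟨σ j, by simp [Tset, h], σ.symm_apply_apply j⟩
    · rintro ⟨a, ha, rfl⟩
      simp only [Tset, Finset.mem_insert, Finset.mem_singleton] at ha
      rcases ha with rfl | rfl | rfl | rfl <;> simp
  rw [if_congr this rfl rfl]
  split_ifs <;> norm_num

theorem exists_perm_pair {a b : Idx} (hab : a ≠ b) :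
    ∃ σ : Equiv.Perm Idx, σ a = none ∧ σ b = some 0 := by
  set τ := Equiv.swap a none with hτ
  have h1 : τ a = none := Equiv.swap_apply_left a none
  have hb' : τ b ≠ none := by
    intro h
    exact hab (τ.injective (h1.trans h.symm))
  refine ⟨τ.trans (Equiv.swap (τ b) (some 0)), ?_, ?_⟩
  · simp only [Equiv.trans_apply, h1]
    rw [Equiv.swap_apply_of_ne_of_ne (Ne.symm hb') (by simp)]
  · simp only [Equiv.trans_apply]
    exact Equiv.swap_apply_left _ _

theorem exists_perm_finset {S : Finset Idx} (hS : S.card = 4) :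
    ∃ σ : Equiv.Perm Idx, ∀ j, σ j ∈ Tset ↔ j ∈ S := by
  have hT : Tset.card = 4 := by decide
  classical
  have e1 : {x // x ∈ S} ≃ {x // x ∈ Tset} := Finset.equivOfCardEq (hS.trans hT.symm)
  have hc : Sᶜ.card = Tsetᶜ.card := by
    rw [Finset.card_compl, Finset.card_compl, hS, hT]
  have e2' : {x // x ∈ Sᶜ} ≃ {x // x ∈ Tsetᶜ} := Finset.equivOfCardEq hc
  have e2 : {x // ¬ x ∈ S} ≃ {x // ¬ x ∈ Tset} :=
    (Equiv.subtypeEquivRight (fun x => (Finset.mem_compl (s := S)).symm)).trans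
      (e2'.trans (Equiv.subtypeEquivRight (fun x => Finset.mem_compl (s := Tset))))
  refine ⟨Equiv.subtypeCongr e1 e2, fun j => ?_⟩
  by_cases hj : j ∈ S
  · simp only [Equiv.subtypeCongr, Equiv.trans_apply, Equiv.sumCompl_symm_apply_of_pos hj,
      Equiv.sumCongr_apply, Sum.map_inl, Equiv.sumCompl_apply_inl]
    exact iff_of_true (e1 ⟨j, hj⟩).2 hj
  · simp only [Equiv.subtypeCongr, Equiv.trans_apply, Equiv.sumCompl_symm_apply_of_neg hj,
      Equiv.sumCongr_apply, Sum.map_inr, Equiv.sumCompl_apply_inr]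
    exact iff_of_false (e2 ⟨j, hj⟩).2 hj

theorem mem_roots_e {a b : Idx} (hab : a ≠ b) : toR (eZ a b) ∈ E7rootsI := by
  obtain ⟨σ, h1, h2⟩ := exists_perm_pair hab
  refine ⟨σ, Or.inl ?_⟩
  rw [lam_comp σ, (Equiv.symm_apply_eq σ).mpr h1.symm, (Equiv.symm_apply_eq σ).mpr h2.symm]

theorem mem_roots_chi {S : Finset Idx} (hS : S.card = 4) :
    ((1 : ℝ) / 2) • toR (chiZ S) ∈ E7rootsI := by
  obtain ⟨σ, hσ⟩ := exists_perm_finset hS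
  refine ⟨σ, Or.inr ?_⟩
  have him : Tset.image σ.symm = S := by
    ext j
    simp only [Finset.mem_image]
    constructor
    · rintro ⟨a, ha, rfl⟩
      rw [← hσ]; simpa using ha
    · intro hj
      exact ⟨σ j, (hσ j).mpr hj, σ.symm_apply_apply j⟩
  rw [mu_comp σ, him]

theorem roots_sub {v : Idx → ℝ} (hv : v ∈ E7rootsI) :
    (∃ a b, a ≠ b ∧ v = toR (eZ a b)) ∨
    (∃ S : Finset Idx, S.card = 4 ∧ v = ((1 : ℝ) / 2) • toR (chiZ S)) := by
  obtain ⟨σ, h | h⟩ := hv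
  · left
    refine ⟨σ.symm none, σ.symm (some 0), fun hc => ?_, h.trans (lam_comp σ)⟩
    exact absurd (σ.symm.injective hc) (by simp)
  · right
    refine ⟨Tset.image σ.symm, ?_, by rw [h, mu_comp σ]⟩
    rw [Finset.card_image_of_injective _ σ.symm.injective]
    decide

/-! ### Decidable facts about the 63 integer vectors -/

theorem hSmallAll : ∀ z ∈ allL, z ≠ 0 ∧ ∀ m, z m = -1 ∨ z m = 0 ∨ z m = 1 := by decide

theorem hNCall : ∀ z ∈ allL, ∀ z' ∈ allL, z ≠ z' → ¬(z' = z ∨ z' = -z) := by decide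

theorem hNodupAll : allL.Nodup := by decide

theorem hCross : ∀ i j : Fin 9, i ≠ j →
    ∀ z ∈ famL i, ∀ z' ∈ famL j, ¬(z' = z ∨ z' = -z) := by decide

theorem hDot : ∀ i : Fin 9, ∀ z ∈ famL i, ∀ z' ∈ famL i, z ≠ z' →
    (∑ m, z m * z' m) = 0 := by decide

theorem hD3 : ∀ z ∈ allL, (∃ a b : Idx, a ≠ b ∧ z = eZ a b) ∨
    (∃ S : Finset Idx, S.card = 4 ∧ z = chiZ S) := by decide

theorem hD4 : ∀ a b : Idx, a ≠ b → ∃ z ∈ allL, eZ a b = z ∨ eZ a b = -z := by decide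

theorem hD5 : ∀ S : Finset Idx, S.card = 4 → ∃ z ∈ allL, chiZ S = z ∨ chiZ S = -z := by decide

theorem mem_allL {z : Idx → ℤ} : z ∈ allL ↔ ∃ i : Fin 9, z ∈ famL i := by
  constructor
  · intro h
    simp only [allL, List.mem_append] at h
    rcases h with ((((((((h | h) | h) | h) | h) | h) | h) | h) | h)
    exacts [⟨0, h⟩, ⟨1, h⟩, ⟨2, h⟩, ⟨3, h⟩, ⟨4, h⟩, ⟨5, h⟩, ⟨6, h⟩, ⟨7, h⟩, ⟨8, h⟩]
  · rintro ⟨i, h⟩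
    fin_cases i <;> simp only [famL, Matrix.cons_val'] at h <;>
      simp [allL, List.mem_append] <;> tauto

theorem small_mem {z : Idx → ℤ} (h : z ∈ allL) : ZSmall z :=
  ⟨(hSmallAll z h).1, (hSmallAll z h).2⟩

theorem mem_famL_allL {i : Fin 9} {z : Idx → ℤ} (h : z ∈ famL i) : z ∈ allL :=
  mem_allL.mpr ⟨i, h⟩

/-! ### Identification of the families with ray lists -/

theorem Qk_eq (k : ZMod 7) : Q k = {x | x ∈ (QL k).map rz} := by
  ext x
  simp only [Q, QL, Set.mem_insert_iff, Set.mem_singleton_iff, List.map_cons, List.map_nil,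
    List.mem_cons, List.not_mem_nil, or_false, Set.mem_setOf_eq, lam_eq, xi_eq, eta_eq, rz]

theorem Qp_eq : Qp = {x | x ∈ muL.map rz} := by
  ext x
  simp only [Qp, Set.mem_image, Set.mem_range, muL, List.map_cons, List.map_nil, List.mem_cons,
    List.not_mem_nil, or_false, Set.mem_setOf_eq]
  constructor
  · rintro ⟨v, ⟨k, rfl⟩, rfl⟩
    have hk := (by decide : ∀ k : ZMod 7,
      k = 0 ∨ k = 1 ∨ k = 2 ∨ k = 3 ∨ k = 4 ∨ k = 5 ∨ k = 6) k
    rcases hk with rfl | rfl | rfl | rfl | rfl | rfl | rfl <;> simp [rz, mu_eq]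
  · rintro (rfl | rfl | rfl | rfl | rfl | rfl | rfl)
    exacts [⟨muV 0, ⟨0, rfl⟩, by rw [mu_eq]; rfl⟩, ⟨muV 1, ⟨1, rfl⟩, by rw [mu_eq]; rfl⟩,
      ⟨muV 2, ⟨2, rfl⟩, by rw [mu_eq]; rfl⟩, ⟨muV 3, ⟨3, rfl⟩, by rw [mu_eq]; rfl⟩,
      ⟨muV 4, ⟨4, rfl⟩, by rw [mu_eq]; rfl⟩, ⟨muV 5, ⟨5, rfl⟩, by rw [mu_eq]; rfl⟩,
      ⟨muV 6, ⟨6, rfl⟩, by rw [mu_eq]; rfl⟩]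

theorem Qm_eq : Qm = {x | x ∈ nuL.map rz} := by
  ext x
  simp only [Qm, Set.mem_image, Set.mem_range, nuL, List.map_cons, List.map_nil, List.mem_cons,
    List.not_mem_nil, or_false, Set.mem_setOf_eq]
  constructor
  · rintro ⟨v, ⟨k, rfl⟩, rfl⟩
    have hk := (by decide : ∀ k : ZMod 7,
      k = 0 ∨ k = 1 ∨ k = 2 ∨ k = 3 ∨ k = 4 ∨ k = 5 ∨ k = 6) k
    rcases hk with rfl | rfl | rfl | rfl | rfl | rfl | rfl <;> simp [rz, nu_eq]
  · rintro (rfl | rfl | rfl | rfl | rfl | rfl | rfl)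
    exacts [⟨nuV 0, ⟨0, rfl⟩, by rw [nu_eq]; rfl⟩, ⟨nuV 1, ⟨1, rfl⟩, by rw [nu_eq]; rfl⟩,
      ⟨nuV 2, ⟨2, rfl⟩, by rw [nu_eq]; rfl⟩, ⟨nuV 3, ⟨3, rfl⟩, by rw [nu_eq]; rfl⟩,
      ⟨nuV 4, ⟨4, rfl⟩, by rw [nu_eq]; rfl⟩, ⟨nuV 5, ⟨5, rfl⟩, by rw [nu_eq]; rfl⟩,
      ⟨nuV 6, ⟨6, rfl⟩, by rw [nu_eq]; rfl⟩]

theorem Qfam_eq (i : Fin 9) : Qfam i = {x | x ∈ (famL i).map rz} := by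
  fin_cases i
  exacts [Qk_eq 0, Qk_eq 1, Qk_eq 2, Qk_eq 3, Qk_eq 4, Qk_eq 5, Qk_eq 6, Qp_eq, Qm_eq]

/-! ### Counting -/

theorem hNodupF : ∀ i : Fin 9, (famL i).Nodup := by decide

theorem hLen : ∀ i : Fin 9, (famL i).length = 7 := by decide

theorem ncard_mem_list {α : Type*} (l : List α) (h : l.Nodup) :
    {x | x ∈ l}.ncard = l.length := by
  classical
  rw [← List.coe_toFinset, Set.ncard_coe_finset, List.toFinset_card_of_nodup h]

theorem nodup_map (i : Fin 9) : ((famL i).map rz).Nodup := by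
  apply List.Nodup.map_on _ (hNodupF i)
  intro x hx y hy hxy
  by_contra hne
  exact ray_ne (small_mem (mem_famL_allL hx)) (small_mem (mem_famL_allL hy))
    (hNCall x (mem_famL_allL hx) y (mem_famL_allL hy) hne) hxy

theorem nodup_map_all : (allL.map rz).Nodup := by
  apply List.Nodup.map_on _ hNodupAll
  intro x hx y hy hxy
  by_contra hne
  exact ray_ne (small_mem hx) (small_mem hy) (hNCall x hx y hy hne) hxy

/-! ### The union -/

theorem union_eq : (⋃ i, Qfam i) = {x | x ∈ allL.map rz} := by
  ext x
  simp only [Set.mem_iUnion, Set.mem_setOf_eq, List.mem_map]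
  constructor
  · rintro ⟨i, hx⟩
    rw [Qfam_eq] at hx
    obtain ⟨z, hz, rfl⟩ := List.mem_map.mp hx
    exact ⟨z, mem_famL_allL hz, rfl⟩
  · rintro ⟨z, hz, rfl⟩
    obtain ⟨i, hi⟩ := mem_allL.mp hz
    exact ⟨i, by rw [Qfam_eq]; exact List.mem_map.mpr ⟨z, hi, rfl⟩⟩

theorem lines_eq : E7linesI = {x | x ∈ allL.map rz} := by
  ext x
  simp only [E7linesI, Set.mem_image, Set.mem_setOf_eq, List.mem_map]
  constructor
  · rintro ⟨v, hv, rfl⟩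
    rcases roots_sub hv with ⟨a, b, hab, rfl⟩ | ⟨S, hS, rfl⟩
    · obtain ⟨z, hz, hpm⟩ := hD4 a b hab
      exact ⟨z, hz, (ray_pm hpm).symm⟩
    · obtain ⟨z, hz, hpm⟩ := hD5 S hS
      have h2 : rayI (((1 : ℝ) / 2) • toR (chiZ S)) = rz (chiZ S) :=
        rayI_smul _ (by norm_num) _
      exact ⟨z, hz, (ray_pm hpm).symm.trans h2.symm⟩
  · rintro ⟨z, hz, rfl⟩
    rcases hD3 z hz with ⟨a, b, hab, rfl⟩ | ⟨S, hS, rfl⟩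
    · exact ⟨toR (eZ a b), mem_roots_e hab, rfl⟩
    · exact ⟨((1 : ℝ) / 2) • toR (chiZ S), mem_roots_chi hS,
        rayI_smul _ (by norm_num) _⟩

/-- the nine sets `Q₀, …, Q₆, Q₊, Q₋` are pairwise disjoint, each
consists of 7 mutually orthogonal projective lines, and their union is the set of 63
projective lines of `E7`. -/
theorem stmt_6 :
    (∀ i j : Fin 9, i ≠ j → Disjoint (Qfam i) (Qfam j)) ∧
    (∀ i : Fin 9, (Qfam i).ncard = 7 ∧ (Qfam i).Pairwise PerpI) ∧
    (⋃ i : Fin 9, Qfam i) = E7linesI ∧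
    E7linesI.ncard = 63 := by
  refine ⟨?_, ?_, ?_, ?_⟩
  · intro i j hij
    rw [Set.disjoint_left]
    intro x hxi hxj
    rw [Qfam_eq] at hxi hxj
    obtain ⟨z, hz, rfl⟩ := List.mem_map.mp hxi
    obtain ⟨z', hz', he⟩ := List.mem_map.mp hxj
    exact ray_ne (small_mem (mem_famL_allL hz)) (small_mem (mem_famL_allL hz'))
      (hCross i j hij z hz z' hz') he.symm
  · intro i
    constructor
    · rw [Qfam_eq, ncard_mem_list _ (nodup_map i), List.length_map, hLen]
    · rw [Qfam_eq]
      intro x hx y hy hne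
      obtain ⟨z, hz, rfl⟩ := List.mem_map.mp hx
      obtain ⟨z', hz', rfl⟩ := List.mem_map.mp hy
      have hzz : z ≠ z' := fun h => hne (by rw [h])
      exact perp_of_dot (hDot i z hz z' hz' hzz)
  · rw [union_eq, lines_eq]
  · rw [lines_eq, ncard_mem_list _ nodup_map_all, List.length_map]
    rfl
end

section
/- In the E7 configuration of 63 projective lines partitioned as Q_1,…,Q_9 (the nine 7-tuples of mutually orthogonal lines), there is no choice of lines l_i ∈ Q_i (i = 1,…,9) such that l_1,…,l_9 are pairwise non-orthogonal; consequently the E7 configuration admits no good bicoloring. -/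
/-- A good bicoloring of the `E7` configuration: every family of 7 mutually
orthogonal lines contains exactly one line with value 1, and no two orthogonal lines
both have value 1. -/
def GoodE7 (v : E7linesI → Bool) : Prop :=
  (∀ M : Finset E7linesI, M.card = 7 →
      ((M : Set E7linesI).Pairwise fun x y => PerpI x.1 y.1) →
      ∃! x : E7linesI, x ∈ M ∧ v x = true) ∧
  (∀ x y : E7linesI, PerpI x.1 y.1 → v x = true → v y = false)


def castV (f : Idx → ℤ) : Idx → ℝ := fun j => (f j : ℝ)

lemma lamV_cast (k : ZMod 7) : lamV k = castV (lamZ k) := by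
  funext j; simp [lamV, lamZ, castV, apply_ite (fun z : ℤ => (z : ℝ))]
lemma xiV_cast (k i : ZMod 7) : xiV k i = castV (xiZ k i) := by
  funext j; simp [xiV, xiZ, castV, apply_ite (fun z : ℤ => (z : ℝ))]
lemma etaV_cast (k i : ZMod 7) : etaV k i = castV (etaZ k i) := by
  funext j; simp [etaV, etaZ, castV, apply_ite (fun z : ℤ => (z : ℝ))]
lemma muV_cast (k : ZMod 7) : muV k = castV (muZ k) := by
  funext j; simp [muV, muZ, castV, apply_ite (fun z : ℤ => (z : ℝ))]
lemma nuV_cast (k : ZMod 7) : nuV k = castV (nuZ k) := by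
  funext j; simp [nuV, nuZ, castV, apply_ite (fun z : ℤ => (z : ℝ))]

def QZ (k : ZMod 7) : Fin 7 → Idx → ℤ
  | 0 => lamZ k | 1 => xiZ k 1 | 2 => xiZ k 2 | 3 => xiZ k 3
  | 4 => etaZ k 1 | 5 => etaZ k 2 | 6 => etaZ k 3
def VZ : Fin 9 → Fin 7 → Idx → ℤ
  | 0 => QZ 0 | 1 => QZ 1 | 2 => QZ 2 | 3 => QZ 3 | 4 => QZ 4 | 5 => QZ 5 | 6 => QZ 6
  | 7 => fun c => muZ (c : ℕ) | 8 => fun c => nuZ (c : ℕ)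

def dotE (f g : Idx → ℤ) : ℤ :=
  f none * g none + (f (some 0) * g (some 0) + f (some 1) * g (some 1) + f (some 2) * g (some 2)
   + f (some 3) * g (some 3) + f (some 4) * g (some 4) + f (some 5) * g (some 5)
   + f (some 6) * g (some 6))

lemma sum_idx (h : Idx → ℝ) : ∑ j, h j = h none + (h (some 0) + h (some 1) + h (some 2)
    + h (some 3) + h (some 4) + h (some 5) + h (some 6)) := by
  rw [Fintype.sum_option]
  congr 1
  exact Fin.sum_univ_seven (f := fun a : Fin 7 => h (some a))

lemma dot_cast_s8 (f g : Idx → ℤ) : ∑ j, castV f j * castV g j = (dotE f g : ℝ) := by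
  rw [sum_idx]; simp [castV, dotE]

lemma perp_of_dot_s8 (f g : Idx → ℤ) (h : dotE f g = 0) :
    PerpI (rayI (castV f)) (rayI (castV g)) := by
  intro x hx y hy
  rw [rayI, Submodule.mem_span_singleton] at hx hy
  obtain ⟨a, rfl⟩ := hx
  obtain ⟨b, rfl⟩ := hy
  have he : ∀ j, (a • castV f) j * (b • castV g) j = (a * b) * (castV f j * castV g j) := by
    intro j; simp only [Pi.smul_apply, smul_eq_mul]; ring
  rw [Finset.sum_congr rfl fun j _ => he j, ← Finset.mul_sum, dot_cast_s8, h]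
  simp

lemma dot_of_perp (f g : Idx → ℤ)
    (h : PerpI (rayI (castV f)) (rayI (castV g))) : dotE f g = 0 := by
  have := h (castV f) (Submodule.mem_span_singleton_self _)
    (castV g) (Submodule.mem_span_singleton_self _)
  rw [dot_cast_s8] at this
  exact_mod_cast this

lemma ray_ne_s8 (f g : Idx → ℤ) (h0 : dotE f g = 0) (h1 : dotE f f ≠ 0) :
    rayI (castV f) ≠ rayI (castV g) := by
  intro he
  have hp := perp_of_dot_s8 f g h0
  rw [← he] at hp
  exact h1 (dot_of_perp f f hp)

/-! ### Membership of the configuration vectors in `E7linesI` -/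

def pfun (v : Idx) (w : Fin 7 → Idx) : Idx → Idx := fun j =>
  j.elim v (fun m => w ⟨m.val, m.val_lt⟩)
def isMu (i : Fin 9) (c : Fin 7) : Bool := (6 < i.val) || (3 < c.val)

def sigT : Fin 9 → Fin 7 → Idx → Idx
  | 0, 0 => pfun (none) ![some 0, some 1, some 2, some 3, some 4, some 5, some 6]
  | 0, 1 => pfun (some 1) ![some 2, none, some 3, some 4, some 5, some 6, some 0]
  | 0, 2 => pfun (some 1) ![some 2, some 3, none, some 4, some 5, some 0, some 6]
  | 0, 3 => pfun (some 1) ![some 2, some 3, some 4, none, some 0, some 5, some 6]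
  | 0, 4 => pfun (none) ![some 0, some 1, some 2, some 4, some 5, some 6, some 3]
  | 0, 5 => pfun (none) ![some 0, some 2, some 1, some 4, some 5, some 3, some 6]
  | 0, 6 => pfun (none) ![some 0, some 2, some 4, some 1, some 3, some 5, some 6]
  | 1, 0 => pfun (none) ![some 1, some 0, some 2, some 3, some 4, some 5, some 6]
  | 1, 1 => pfun (some 1) ![some 0, some 2, none, some 3, some 4, some 5, some 6]
  | 1, 2 => pfun (some 1) ![some 2, some 3, some 4, none, some 5, some 6, some 0]
  | 1, 3 => pfun (some 1) ![some 2, some 3, some 4, some 5, none, some 0, some 6]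
  | 1, 4 => pfun (none) ![some 0, some 1, some 3, some 2, some 4, some 5, some 6]
  | 1, 5 => pfun (none) ![some 2, some 0, some 4, some 1, some 5, some 6, some 3]
  | 1, 6 => pfun (none) ![some 2, some 0, some 4, some 5, some 1, some 3, some 6]
  | 2, 0 => pfun (none) ![some 1, some 2, some 0, some 3, some 4, some 5, some 6]
  | 2, 1 => pfun (some 1) ![some 2, some 0, some 3, none, some 4, some 5, some 6]
  | 2, 2 => pfun (some 1) ![some 0, some 2, some 3, some 4, none, some 5, some 6]
  | 2, 3 => pfun (some 1) ![some 2, some 3, some 4, some 5, some 6, none, some 0]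
  | 2, 4 => pfun (none) ![some 2, some 0, some 1, some 3, some 4, some 5, some 6]
  | 2, 5 => pfun (none) ![some 0, some 2, some 1, some 4, some 3, some 5, some 6]
  | 2, 6 => pfun (none) ![some 2, some 4, some 0, some 5, some 6, some 1, some 3]
  | 3, 0 => pfun (none) ![some 1, some 2, some 3, some 0, some 4, some 5, some 6]
  | 3, 1 => pfun (some 1) ![some 2, some 3, some 0, some 4, none, some 5, some 6]
  | 3, 2 => pfun (some 1) ![some 2, some 0, some 3, some 4, some 5, none, some 6]
  | 3, 3 => pfun (some 1) ![some 0, some 2, some 3, some 4, some 5, some 6, none]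
  | 3, 4 => pfun (none) ![some 2, some 4, some 0, some 1, some 3, some 5, some 6]
  | 3, 5 => pfun (none) ![some 2, some 0, some 4, some 1, some 5, some 3, some 6]
  | 3, 6 => pfun (none) ![some 0, some 2, some 4, some 1, some 5, some 6, some 3]
  | 4, 0 => pfun (none) ![some 1, some 2, some 3, some 4, some 0, some 5, some 6]
  | 4, 1 => pfun (some 1) ![some 2, some 3, some 4, some 0, some 5, none, some 6]
  | 4, 2 => pfun (some 1) ![some 2, some 3, some 0, some 4, some 5, some 6, none]
  | 4, 3 => pfun (some 1) ![none, some 0, some 2, some 3, some 4, some 5, some 6]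
  | 4, 4 => pfun (none) ![some 2, some 4, some 5, some 0, some 1, some 3, some 6]
  | 4, 5 => pfun (none) ![some 2, some 4, some 0, some 5, some 1, some 6, some 3]
  | 4, 6 => pfun (none) ![some 0, some 1, some 2, some 4, some 3, some 5, some 6]
  | 5, 0 => pfun (none) ![some 1, some 2, some 3, some 4, some 5, some 0, some 6]
  | 5, 1 => pfun (some 1) ![some 2, some 3, some 4, some 5, some 0, some 6, none]
  | 5, 2 => pfun (some 1) ![none, some 2, some 3, some 0, some 4, some 5, some 6]
  | 5, 3 => pfun (some 1) ![some 2, none, some 0, some 3, some 4, some 5, some 6]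
  | 5, 4 => pfun (none) ![some 2, some 4, some 5, some 6, some 0, some 1, some 3]
  | 5, 5 => pfun (none) ![some 0, some 2, some 4, some 1, some 5, some 3, some 6]
  | 5, 6 => pfun (none) ![some 2, some 0, some 1, some 4, some 5, some 3, some 6]
  | 6, 0 => pfun (none) ![some 1, some 2, some 3, some 4, some 5, some 6, some 0]
  | 6, 1 => pfun (some 1) ![none, some 2, some 3, some 4, some 5, some 0, some 6]
  | 6, 2 => pfun (some 1) ![some 2, none, some 3, some 4, some 0, some 5, some 6]
  | 6, 3 => pfun (some 1) ![some 2, some 3, none, some 0, some 4, some 5, some 6]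
  | 6, 4 => pfun (none) ![some 0, some 2, some 4, some 5, some 6, some 1, some 3]
  | 6, 5 => pfun (none) ![some 2, some 0, some 4, some 5, some 1, some 6, some 3]
  | 6, 6 => pfun (none) ![some 2, some 4, some 0, some 1, some 5, some 6, some 3]
  | 7, 0 => pfun (none) ![some 0, some 1, some 2, some 3, some 4, some 5, some 6]
  | 7, 1 => pfun (none) ![some 2, some 0, some 1, some 4, some 3, some 5, some 6]
  | 7, 2 => pfun (none) ![some 2, some 4, some 0, some 1, some 5, some 3, some 6]
  | 7, 3 => pfun (none) ![some 2, some 4, some 5, some 0, some 1, some 6, some 3]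
  | 7, 4 => pfun (none) ![some 0, some 2, some 4, some 5, some 1, some 3, some 6]
  | 7, 5 => pfun (none) ![some 2, some 0, some 4, some 5, some 6, some 1, some 3]
  | 7, 6 => pfun (none) ![some 0, some 2, some 1, some 4, some 5, some 6, some 3]
  | 8, 0 => pfun (none) ![some 0, some 2, some 4, some 5, some 1, some 6, some 3]
  | 8, 1 => pfun (none) ![some 0, some 1, some 2, some 4, some 5, some 3, some 6]
  | 8, 2 => pfun (none) ![some 2, some 0, some 1, some 4, some 5, some 6, some 3]
  | 8, 3 => pfun (none) ![some 0, some 2, some 1, some 3, some 4, some 5, some 6]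
  | 8, 4 => pfun (none) ![some 2, some 0, some 4, some 1, some 3, some 5, some 6]
  | 8, 5 => pfun (none) ![some 2, some 4, some 0, some 5, some 1, some 3, some 6]
  | 8, 6 => pfun (none) ![some 2, some 4, some 5, some 0, some 6, some 1, some 3]
def invT : Fin 9 → Fin 7 → Idx → Idx
  | 0, 0 => pfun (none) ![some 0, some 1, some 2, some 3, some 4, some 5, some 6]
  | 0, 1 => pfun (some 1) ![some 6, none, some 0, some 2, some 3, some 4, some 5]
  | 0, 2 => pfun (some 2) ![some 5, none, some 0, some 1, some 3, some 4, some 6]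
  | 0, 3 => pfun (some 3) ![some 4, none, some 0, some 1, some 2, some 5, some 6]
  | 0, 4 => pfun (none) ![some 0, some 1, some 2, some 6, some 3, some 4, some 5]
  | 0, 5 => pfun (none) ![some 0, some 2, some 1, some 5, some 3, some 4, some 6]
  | 0, 6 => pfun (none) ![some 0, some 3, some 1, some 4, some 2, some 5, some 6]
  | 1, 0 => pfun (none) ![some 1, some 0, some 2, some 3, some 4, some 5, some 6]
  | 1, 1 => pfun (some 2) ![some 0, none, some 1, some 3, some 4, some 5, some 6]
  | 1, 2 => pfun (some 3) ![some 6, none, some 0, some 1, some 2, some 4, some 5]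
  | 1, 3 => pfun (some 4) ![some 5, none, some 0, some 1, some 2, some 3, some 6]
  | 1, 4 => pfun (none) ![some 0, some 1, some 3, some 2, some 4, some 5, some 6]
  | 1, 5 => pfun (none) ![some 1, some 3, some 0, some 6, some 2, some 4, some 5]
  | 1, 6 => pfun (none) ![some 1, some 4, some 0, some 5, some 2, some 3, some 6]
  | 2, 0 => pfun (none) ![some 2, some 0, some 1, some 3, some 4, some 5, some 6]
  | 2, 1 => pfun (some 3) ![some 1, none, some 0, some 2, some 4, some 5, some 6]
  | 2, 2 => pfun (some 4) ![some 0, none, some 1, some 2, some 3, some 5, some 6]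
  | 2, 3 => pfun (some 5) ![some 6, none, some 0, some 1, some 2, some 3, some 4]
  | 2, 4 => pfun (none) ![some 1, some 2, some 0, some 3, some 4, some 5, some 6]
  | 2, 5 => pfun (none) ![some 0, some 2, some 1, some 4, some 3, some 5, some 6]
  | 2, 6 => pfun (none) ![some 2, some 5, some 0, some 6, some 1, some 3, some 4]
  | 3, 0 => pfun (none) ![some 3, some 0, some 1, some 2, some 4, some 5, some 6]
  | 3, 1 => pfun (some 4) ![some 2, none, some 0, some 1, some 3, some 5, some 6]
  | 3, 2 => pfun (some 5) ![some 1, none, some 0, some 2, some 3, some 4, some 6]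
  | 3, 3 => pfun (some 6) ![some 0, none, some 1, some 2, some 3, some 4, some 5]
  | 3, 4 => pfun (none) ![some 2, some 3, some 0, some 4, some 1, some 5, some 6]
  | 3, 5 => pfun (none) ![some 1, some 3, some 0, some 5, some 2, some 4, some 6]
  | 3, 6 => pfun (none) ![some 0, some 3, some 1, some 6, some 2, some 4, some 5]
  | 4, 0 => pfun (none) ![some 4, some 0, some 1, some 2, some 3, some 5, some 6]
  | 4, 1 => pfun (some 5) ![some 3, none, some 0, some 1, some 2, some 4, some 6]
  | 4, 2 => pfun (some 6) ![some 2, none, some 0, some 1, some 3, some 4, some 5]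
  | 4, 3 => pfun (some 0) ![some 1, none, some 2, some 3, some 4, some 5, some 6]
  | 4, 4 => pfun (none) ![some 3, some 4, some 0, some 5, some 1, some 2, some 6]
  | 4, 5 => pfun (none) ![some 2, some 4, some 0, some 6, some 1, some 3, some 5]
  | 4, 6 => pfun (none) ![some 0, some 1, some 2, some 4, some 3, some 5, some 6]
  | 5, 0 => pfun (none) ![some 5, some 0, some 1, some 2, some 3, some 4, some 6]
  | 5, 1 => pfun (some 6) ![some 4, none, some 0, some 1, some 2, some 3, some 5]
  | 5, 2 => pfun (some 0) ![some 3, none, some 1, some 2, some 4, some 5, some 6]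
  | 5, 3 => pfun (some 1) ![some 2, none, some 0, some 3, some 4, some 5, some 6]
  | 5, 4 => pfun (none) ![some 4, some 5, some 0, some 6, some 1, some 2, some 3]
  | 5, 5 => pfun (none) ![some 0, some 3, some 1, some 5, some 2, some 4, some 6]
  | 5, 6 => pfun (none) ![some 1, some 2, some 0, some 5, some 3, some 4, some 6]
  | 6, 0 => pfun (none) ![some 6, some 0, some 1, some 2, some 3, some 4, some 5]
  | 6, 1 => pfun (some 0) ![some 5, none, some 1, some 2, some 3, some 4, some 6]
  | 6, 2 => pfun (some 1) ![some 4, none, some 0, some 2, some 3, some 5, some 6]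
  | 6, 3 => pfun (some 2) ![some 3, none, some 0, some 1, some 4, some 5, some 6]
  | 6, 4 => pfun (none) ![some 0, some 5, some 1, some 6, some 2, some 3, some 4]
  | 6, 5 => pfun (none) ![some 1, some 4, some 0, some 6, some 2, some 3, some 5]
  | 6, 6 => pfun (none) ![some 2, some 3, some 0, some 6, some 1, some 4, some 5]
  | 7, 0 => pfun (none) ![some 0, some 1, some 2, some 3, some 4, some 5, some 6]
  | 7, 1 => pfun (none) ![some 1, some 2, some 0, some 4, some 3, some 5, some 6]
  | 7, 2 => pfun (none) ![some 2, some 3, some 0, some 5, some 1, some 4, some 6]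
  | 7, 3 => pfun (none) ![some 3, some 4, some 0, some 6, some 1, some 2, some 5]
  | 7, 4 => pfun (none) ![some 0, some 4, some 1, some 5, some 2, some 3, some 6]
  | 7, 5 => pfun (none) ![some 1, some 5, some 0, some 6, some 2, some 3, some 4]
  | 7, 6 => pfun (none) ![some 0, some 2, some 1, some 6, some 3, some 4, some 5]
  | 8, 0 => pfun (none) ![some 0, some 4, some 1, some 6, some 2, some 3, some 5]
  | 8, 1 => pfun (none) ![some 0, some 1, some 2, some 5, some 3, some 4, some 6]
  | 8, 2 => pfun (none) ![some 1, some 2, some 0, some 6, some 3, some 4, some 5]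
  | 8, 3 => pfun (none) ![some 0, some 2, some 1, some 3, some 4, some 5, some 6]
  | 8, 4 => pfun (none) ![some 1, some 3, some 0, some 4, some 2, some 5, some 6]
  | 8, 5 => pfun (none) ![some 2, some 4, some 0, some 5, some 1, some 3, some 6]
  | 8, 6 => pfun (none) ![some 3, some 5, some 0, some 6, some 1, some 2, some 4]

lemma key_inv : ∀ (i : Fin 9) (c : Fin 7) (j : Idx),
    invT i c (sigT i c j) = j ∧ sigT i c (invT i c j) = j := by decide
lemma key_lam : ∀ (i : Fin 9) (c : Fin 7), isMu i c = false →
    ∀ j, VZ i c j = lamZ 0 (sigT i c j) := by decide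
lemma key_mu : ∀ (i : Fin 9) (c : Fin 7), isMu i c = true →
    ∀ j, VZ i c j = muZ 0 (sigT i c j) := by decide

lemma memLam (f : Idx → ℤ) (s t : Idx → Idx) (h1 : ∀ j, t (s j) = j) (h2 : ∀ j, s (t j) = j)
    (h : ∀ j, f j = lamZ 0 (s j)) : rayI (castV f) ∈ E7linesI := by
  refine ⟨castV f, ⟨⟨s, t, h1, h2⟩, Or.inl ?_⟩, rfl⟩
  funext j
  show (f j : ℝ) = lamV 0 (s j)
  rw [h j, lamV_cast 0]; rfl

lemma memMu (f : Idx → ℤ) (s t : Idx → Idx) (h1 : ∀ j, t (s j) = j) (h2 : ∀ j, s (t j) = j)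
    (h : ∀ j, f j = muZ 0 (s j)) : rayI (castV f) ∈ E7linesI := by
  have hw : muV 0 ∘ (⟨s, t, h1, h2⟩ : Equiv.Perm Idx) = castV f := by
    funext j
    show muV 0 (s j) = (f j : ℝ)
    rw [h j, muV_cast 0]; rfl
  refine ⟨((1 : ℝ) / 2) • (muV 0 ∘ (⟨s, t, h1, h2⟩ : Equiv.Perm Idx)),
    ⟨⟨s, t, h1, h2⟩, Or.inr rfl⟩, ?_⟩
  rw [hw, rayI, rayI]
  exact Submodule.span_singleton_smul_eq (by norm_num : IsUnit ((1 : ℝ) / 2)) _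

lemma memE7 (i : Fin 9) (c : Fin 7) : rayI (castV (VZ i c)) ∈ E7linesI := by
  cases hm : isMu i c
  · exact memLam (VZ i c) (sigT i c) (invT i c) (fun j => (key_inv i c j).1)
      (fun j => (key_inv i c j).2) (key_lam i c hm)
  · exact memMu (VZ i c) (sigT i c) (invT i c) (fun j => (key_inv i c j).1)
      (fun j => (key_inv i c j).2) (key_mu i c hm)

/-! ### The families as ranges -/

lemma Q_eq (k : ZMod 7) : Q k = Set.range (fun c : Fin 7 => rayI (castV (QZ k c))) := by
  ext L
  simp only [Q, Set.mem_insert_iff, Set.mem_singleton_iff, Set.mem_range]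
  constructor
  · rintro (rfl|rfl|rfl|rfl|rfl|rfl|rfl)
    exacts [⟨0, by rw [lamV_cast]; rfl⟩,
      ⟨1, by rw [xiV_cast]; rfl⟩,
      ⟨2, by rw [xiV_cast]; rfl⟩,
      ⟨3, by rw [xiV_cast]; rfl⟩,
      ⟨4, by rw [etaV_cast]; rfl⟩,
      ⟨5, by rw [etaV_cast]; rfl⟩,
      ⟨6, by rw [etaV_cast]; rfl⟩]
  · rintro ⟨c, rfl⟩
    fin_cases c
    · exact Or.inl (by rw [lamV_cast]; rfl)
    · exact Or.inr (Or.inl (by rw [xiV_cast]; rfl))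
    · exact Or.inr (Or.inr (Or.inl (by rw [xiV_cast]; rfl)))
    · exact Or.inr (Or.inr (Or.inr (Or.inl (by rw [xiV_cast]; rfl))))
    · exact Or.inr (Or.inr (Or.inr (Or.inr (Or.inl (by rw [etaV_cast]; rfl)))))
    · exact Or.inr (Or.inr (Or.inr (Or.inr (Or.inr (Or.inl (by rw [etaV_cast]; rfl))))))
    · exact Or.inr (Or.inr (Or.inr (Or.inr (Or.inr (Or.inr (by rw [etaV_cast]; rfl))))))

lemma Qp_eq_s8 : Qp = Set.range (fun c : Fin 7 => rayI (castV (VZ 7 c))) := by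
  ext L
  simp only [Qp, Set.mem_image, Set.mem_range]
  constructor
  · rintro ⟨w, ⟨k, rfl⟩, rfl⟩
    refine ⟨⟨k.val, k.val_lt⟩, ?_⟩
    have hv : VZ 7 ⟨k.val, k.val_lt⟩ = muZ ((k.val : ℕ) : ZMod 7) := rfl
    rw [hv, ZMod.natCast_rightInverse k, ← muV_cast]
  · rintro ⟨c, rfl⟩
    refine ⟨muV ((c : ℕ) : ZMod 7), ⟨_, rfl⟩, ?_⟩
    rw [muV_cast]; rfl

lemma Qm_eq_s8 : Qm = Set.range (fun c : Fin 7 => rayI (castV (VZ 8 c))) := by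
  ext L
  simp only [Qm, Set.mem_image, Set.mem_range]
  constructor
  · rintro ⟨w, ⟨k, rfl⟩, rfl⟩
    refine ⟨⟨k.val, k.val_lt⟩, ?_⟩
    have hv : VZ 8 ⟨k.val, k.val_lt⟩ = nuZ ((k.val : ℕ) : ZMod 7) := rfl
    rw [hv, ZMod.natCast_rightInverse k, ← nuV_cast]
  · rintro ⟨c, rfl⟩
    refine ⟨nuV ((c : ℕ) : ZMod 7), ⟨_, rfl⟩, ?_⟩
    rw [nuV_cast]; rfl

lemma Qfam_eq_s8 (i : Fin 9) : Qfam i = Set.range (fun c : Fin 7 => rayI (castV (VZ i c))) := by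
  fin_cases i
  · exact Q_eq 0
  · exact Q_eq 1
  · exact Q_eq 2
  · exact Q_eq 3
  · exact Q_eq 4
  · exact Q_eq 5
  · exact Q_eq 6
  · exact Qp_eq_s8
  · exact Qm_eq_s8

/-! ### The exhaustive search -/

def compatB (i : Fin 9) (c : Fin 7) (p : Fin 9 × Fin 7) : Bool :=
  dotE (VZ i c) (VZ p.1 p.2) != 0

def srch : List (Fin 9) → List (Fin 9 × Fin 7) → Bool
  | [], _ => true
  | i :: todo, sel =>
    (List.finRange 7).any fun c => (sel.all (compatB i c)) && srch todo ((i, c) :: sel)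

lemma srch_sound (f : Fin 9 → Fin 7) : ∀ (todo : List (Fin 9)) (sel : List (Fin 9 × Fin 7)),
    todo.Nodup →
    (∀ i ∈ todo, ∀ p ∈ sel, compatB i (f i) p = true) →
    (∀ i ∈ todo, ∀ j ∈ todo, i ≠ j → compatB i (f i) (j, f j) = true) →
    srch todo sel = true := by
  intro todo
  induction todo with
  | nil => intro sel _ _ _; rfl
  | cons i todo ih =>
    intro sel hnd h1 h2
    have hi : i ∈ i :: todo := List.mem_cons_self (a := i) (l := todo)
    simp only [srch, List.any_eq_true]
    refine ⟨f i, List.mem_finRange _, ?_⟩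
    rw [Bool.and_eq_true, List.all_eq_true]
    refine ⟨fun p hp => h1 i hi p hp, ?_⟩
    have hnotin : i ∉ todo := (List.nodup_cons.mp hnd).1
    apply ih ((i, f i) :: sel) (List.nodup_cons.mp hnd).2
    · intro j hj p hp
      rcases List.mem_cons.mp hp with rfl | hp
      · exact h2 j (List.mem_cons_of_mem _ hj) i hi (fun he => hnotin (he ▸ hj))
      · exact h1 j (List.mem_cons_of_mem _ hj) p hp
    · exact fun j hj j' hj' hne =>
        h2 j (List.mem_cons_of_mem _ hj) j' (List.mem_cons_of_mem _ hj') hne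

lemma noSel : srch (List.finRange 9) [] = false := by decide

lemma dot_self_ne : ∀ (i : Fin 9) (c : Fin 7), dotE (VZ i c) (VZ i c) ≠ 0 := by decide
lemma dot_zero : ∀ (i : Fin 9) (c d : Fin 7), c ≠ d → dotE (VZ i c) (VZ i d) = 0 := by decide

lemma part1 : ¬ ∃ l : Fin 9 → Submodule ℝ (Idx → ℝ),
    (∀ i, l i ∈ Qfam i) ∧ ∀ i j, i ≠ j → ¬ PerpI (l i) (l j) := by
  rintro ⟨l, hmem, hnp⟩
  have hex : ∀ i, ∃ c : Fin 7, l i = rayI (castV (VZ i c)) := by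
    intro i
    have h := hmem i
    rw [Qfam_eq_s8] at h
    obtain ⟨c, hc⟩ := h
    exact ⟨c, hc.symm⟩
  choose c hc using hex
  have hcompat : ∀ i ∈ List.finRange 9, ∀ j ∈ List.finRange 9, i ≠ j →
      compatB i (c i) (j, c j) = true := by
    intro i _ j _ hij
    have hd : dotE (VZ i (c i)) (VZ j (c j)) ≠ 0 := by
      intro h0
      exact hnp i j hij (hc i ▸ hc j ▸ perp_of_dot_s8 _ _ h0)
    simp [compatB, hd]
  have := srch_sound c (List.finRange 9) [] (List.nodup_finRange 9)
    (by simp) hcompat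
  rw [noSel] at this
  simp at this

/-- there is no choice of lines `lᵢ ∈ Qᵢ` (one in each member of the
partition `Q₀, …, Q₆, Q₊, Q₋`) which are pairwise non-orthogonal; consequently the
`E7` configuration admits no good bicoloring. -/
theorem stmt_8 :
    (¬ ∃ l : Fin 9 → Submodule ℝ (Idx → ℝ),
        (∀ i, l i ∈ Qfam i) ∧ ∀ i j, i ≠ j → ¬ PerpI (l i) (l j)) ∧
    ¬ ∃ v : E7linesI → Bool, GoodE7 v := by
  constructor
  · exact part1
  · rintro ⟨v, h1, h2⟩
    classical
    have hpick : ∀ i : Fin 9, ∃ x : E7linesI,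
        (∃ c : Fin 7, x.1 = rayI (castV (VZ i c))) ∧ v x = true := by
      intro i
      set F : Fin 7 → E7linesI := fun c => ⟨rayI (castV (VZ i c)), memE7 i c⟩ with hF
      have hinj : Function.Injective F := by
        intro a b hab
        by_contra hne
        exact ray_ne_s8 (VZ i a) (VZ i b) (dot_zero i a b hne) (dot_self_ne i a)
          (congrArg Subtype.val hab)
      have hcard : (Finset.univ.image F).card = 7 := by
        rw [Finset.card_image_of_injective _ hinj, Finset.card_univ, Fintype.card_fin]
      have hpair : ((Finset.univ.image F : Finset E7linesI) : Set E7linesI).Pairwise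
          (fun x y => PerpI x.1 y.1) := by
        intro x hx y hy hxy
        simp only [Finset.coe_image, Finset.coe_univ, Set.image_univ, Set.mem_range] at hx hy
        obtain ⟨a, rfl⟩ := hx
        obtain ⟨b, rfl⟩ := hy
        have hab : a ≠ b := fun h => hxy (h ▸ rfl)
        exact perp_of_dot_s8 _ _ (dot_zero i a b hab)
      obtain ⟨x, ⟨hxM, hxv⟩, -⟩ := h1 (Finset.univ.image F) hcard hpair
      obtain ⟨cx, -, hcx⟩ := Finset.mem_image.mp hxM
      exact ⟨x, ⟨cx, by rw [← hcx]⟩, hxv⟩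
    choose x hx hv using hpick
    apply part1
    refine ⟨fun i => (x i).1, fun i => ?_, fun i j hij hperp => ?_⟩
    · rw [Qfam_eq_s8]
      obtain ⟨ci, hci⟩ := hx i
      exact ⟨ci, hci.symm⟩
    · have hfalse := h2 (x i) (x j) hperp (hv i)
      rw [hv j] at hfalse
      simp at hfalse
end
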